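/- In the ring k[[π₀]][[u]], the element π₀ − u₀ factors as π₀ − u₀ = v·Q, where v is a unit of k[[π₀]][[u]] and Q ∈ k[[π₀]][u] is an Eisenstein polynomial in u of degree e over k[[π₀]]: Q is monic of degree e in u, all coefficients of uⁱ for i < e lie in the ideal (π₀), and the constant coefficient is π₀ times a unit (in particular it does not lie in (π₀²)). -/

import Mathlib

open PowerSeries

namespace Stmt10Aux

variable {k : Type*} [Field k]

noncomputable section

variable (e : ℕ)

/-- shift-by-`e` of `g * h`. -/
def Nmap (g h : PowerSeries (PowerSeries k)) : PowerSeries (PowerSeries k) :=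
  PowerSeries.mk fun n => PowerSeries.coeff (n + e) (g * h)

/-- approximating sequence for the fixed point `t = 1 - C X * Nmap e g t`. -/
def Tseq (g : PowerSeries (PowerSeries k)) : ℕ → PowerSeries (PowerSeries k)
  | 0 => 1
  | j + 1 => 1 - PowerSeries.C PowerSeries.X * Nmap e g (Tseq g j)

/-- the fixed point, assembled coefficientwise. -/
def tA (g : PowerSeries (PowerSeries k)) : PowerSeries (PowerSeries k) :=
  PowerSeries.mk fun n => PowerSeries.mk fun m =>
    PowerSeries.coeff m (PowerSeries.coeff n (Tseq e g (m + 1)))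

/-- congruence mod `X^m` (inner variable), coefficientwise. -/
def Em (m : ℕ) (x y : PowerSeries (PowerSeries k)) : Prop :=
  ∀ n i, i < m →
    PowerSeries.coeff i (PowerSeries.coeff n x) =
      PowerSeries.coeff i (PowerSeries.coeff n y)

theorem Em_mul {m : ℕ} {x y : PowerSeries (PowerSeries k)}
    (g : PowerSeries (PowerSeries k)) (h : Em m x y) : Em m (g * x) (g * y) := by
  intro n i hi
  rw [PowerSeries.coeff_mul, PowerSeries.coeff_mul, map_sum, map_sum]
  refine Finset.sum_congr rfl fun p hp => ?_
  rw [PowerSeries.coeff_mul, PowerSeries.coeff_mul]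
  refine Finset.sum_congr rfl fun q hq => ?_
  have hq2 : q.2 ≤ i := by
    have := Finset.HasAntidiagonal.mem_antidiagonal.mp hq; omega
  rw [h p.2 q.2 (lt_of_le_of_lt hq2 hi)]

theorem Em_step {m : ℕ} {x y : PowerSeries (PowerSeries k)}
    (g : PowerSeries (PowerSeries k)) (h : Em m x y) :
    Em (m + 1) (1 - PowerSeries.C PowerSeries.X * Nmap e g x)
      (1 - PowerSeries.C PowerSeries.X * Nmap e g y) := by
  intro n i hi
  simp only [map_sub, PowerSeries.coeff_C_mul]
  congr 1
  cases i with
  | zero => simp [PowerSeries.coeff_zero_X_mul]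
  | succ i =>
    rw [PowerSeries.coeff_succ_X_mul, PowerSeries.coeff_succ_X_mul]
    simp only [Nmap, PowerSeries.coeff_mk]
    exact Em_mul g h (n + e) i (by omega)

theorem Em_Tseq (g : PowerSeries (PowerSeries k)) :
    ∀ j, Em j (Tseq e g j) (Tseq e g (j + 1)) := by
  intro j
  induction j with
  | zero => intro n i hi; omega
  | succ j ih => exact Em_step e g ih

theorem Tseq_stab (g : PowerSeries (PowerSeries k)) {m j : ℕ} (h : m ≤ j) :
    Em m (Tseq e g m) (Tseq e g j) := by
  induction j, h using Nat.le_induction with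
  | base => intro n i hi; rfl
  | succ j hmj ih =>
    intro n i hi
    rw [ih n i hi, Em_Tseq e g j n i (lt_of_lt_of_le hi hmj)]

theorem Em_tA (g : PowerSeries (PowerSeries k)) (m : ℕ) :
    Em (m + 1) (tA e g) (Tseq e g (m + 1)) := by
  intro n i hi
  simp only [tA, PowerSeries.coeff_mk]
  exact (Tseq_stab e g (by omega : i + 1 ≤ m + 1)) n i (by omega)

theorem tA_fixed (g : PowerSeries (PowerSeries k)) :
    tA e g = 1 - PowerSeries.C PowerSeries.X * Nmap e g (tA e g) := by
  apply PowerSeries.ext; intro n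
  apply PowerSeries.ext; intro m
  have h1 : Em (m + 2) (1 - PowerSeries.C PowerSeries.X * Nmap e g (tA e g))
      (Tseq e g (m + 2)) := Em_step e g (Em_tA e g m)
  have h2 := (Em_Tseq e g (m + 1)) n m (by omega)
  have h3 := h1 n m (by omega)
  have hL : PowerSeries.coeff m (PowerSeries.coeff n (tA e g)) =
      PowerSeries.coeff m (PowerSeries.coeff n (Tseq e g (m + 1))) := by
    simp [tA]
  rw [hL, h3]; exact h2

end
end Stmt10Aux


/-- In `k[[π₀]][[u]]`, the element `π₀ − u₀` (where `u₀ ∈ k[[u]]` has `ord_u(u₀) = e ≥ 1`)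
factors as a unit times an Eisenstein polynomial in `u` of degree `e` over `k[[π₀]]`. -/
theorem stmt10 (k : Type*) [Field k] (e : ℕ) (he : 1 ≤ e)
    (a : ℕ → k) (hlt : ∀ i < e, a i = 0) (hne : a e ≠ 0) :
    ∃ (v : PowerSeries (PowerSeries k)) (Q : Polynomial (PowerSeries k)),
      IsUnit v ∧ Q.Monic ∧ Q.natDegree = e ∧
      (∀ i < e, PowerSeries.constantCoeff (Q.coeff i) = 0) ∧
      (∃ w : PowerSeries k, IsUnit w ∧ Q.coeff 0 = PowerSeries.X * w) ∧
      PowerSeries.C (PowerSeries.X : PowerSeries k) -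
          PowerSeries.mk (fun i => PowerSeries.C (a i)) =
        v * (Q : PowerSeries (PowerSeries k)) := by
  classical
  set f : PowerSeries (PowerSeries k) :=
    PowerSeries.C (PowerSeries.X : PowerSeries k) -
      PowerSeries.mk (fun i => PowerSeries.C (a i)) with hf_def
  set s : PowerSeries (PowerSeries k) :=
    PowerSeries.mk fun n => -(PowerSeries.C (a (n + e))) with hs_def
  have hs : IsUnit s := by
    rw [PowerSeries.isUnit_iff_constantCoeff]
    rw [← PowerSeries.coeff_zero_eq_constantCoeff_apply]
    rw [hs_def, PowerSeries.coeff_mk]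
    rw [PowerSeries.isUnit_iff_constantCoeff]
    simp [hne]
  obtain ⟨su, hsu⟩ := hs
  set g : PowerSeries (PowerSeries k) := ↑su⁻¹ with hg
  have hgs : g * s = 1 := by rw [hg, ← hsu]; exact su.inv_mul
  set t := Stmt10Aux.tA e g with ht
  have hfix := Stmt10Aux.tA_fixed e g
  rw [← ht] at hfix
  have hf : f = PowerSeries.C PowerSeries.X + PowerSeries.X ^ e * s := by
    apply PowerSeries.ext; intro n
    rw [hf_def, hs_def, map_sub, map_add, sub_eq_add_neg]
    congr 1
    rw [PowerSeries.coeff_mk, PowerSeries.coeff_X_pow_mul']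
    rcases lt_or_ge n e with hn | hn
    · rw [if_neg (by omega), hlt n hn]; simp
    · rw [if_pos hn, PowerSeries.coeff_mk]
      have hne' : n - e + e = n := by omega
      rw [hne']
  set Qs : PowerSeries (PowerSeries k) := g * t * f with hQs_def
  have hQs : Qs = PowerSeries.C PowerSeries.X * (g * t) + PowerSeries.X ^ e * t := by
    rw [hQs_def, hf]
    have h : g * t * (PowerSeries.C PowerSeries.X + PowerSeries.X ^ e * s)
        = PowerSeries.C PowerSeries.X * (g * t)
          + PowerSeries.X ^ e * (g * s * t) := by ring
    rw [h, hgs, one_mul]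
  have hlow : ∀ i, i < e →
      PowerSeries.coeff i Qs = PowerSeries.X * PowerSeries.coeff i (g * t) := by
    intro i hi
    rw [hQs, map_add, PowerSeries.coeff_C_mul, PowerSeries.coeff_X_pow_mul',
      if_neg (by omega), add_zero]
  have hhigh : ∀ n, PowerSeries.coeff (n + e) Qs = if n = 0 then 1 else 0 := by
    intro n
    have hcoefft : PowerSeries.coeff n t
        = (if n = 0 then 1 else 0)
          - PowerSeries.X * PowerSeries.coeff (n + e) (g * t) := by
      conv_lhs => rw [hfix]
      rw [map_sub, PowerSeries.coeff_one, PowerSeries.coeff_C_mul]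
      simp [Stmt10Aux.Nmap]
    rw [hQs, map_add, PowerSeries.coeff_C_mul, PowerSeries.coeff_X_pow_mul, hcoefft]
    ring
  have ht0 : PowerSeries.coeff 0 (PowerSeries.coeff 0 t) = 1 := by
    rw [ht]
    simp [Stmt10Aux.tA, Stmt10Aux.Tseq, Stmt10Aux.Nmap, PowerSeries.coeff_zero_X_mul]
  have hUt : IsUnit t := by
    rw [PowerSeries.isUnit_iff_constantCoeff, PowerSeries.isUnit_iff_constantCoeff,
      ← PowerSeries.coeff_zero_eq_constantCoeff_apply,
      ← PowerSeries.coeff_zero_eq_constantCoeff_apply, ht0]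
    exact isUnit_one
  have hUg : IsUnit g := (su⁻¹).isUnit
  have hUq : IsUnit (g * t) := hUg.mul hUt
  obtain ⟨qu, hqu⟩ := hUq
  set Qp : Polynomial (PowerSeries k) :=
    Polynomial.X ^ e + ∑ i ∈ Finset.range e,
      Polynomial.C (PowerSeries.coeff i Qs) * Polynomial.X ^ i with hQp
  have hsumdeg : (∑ i ∈ Finset.range e,
      Polynomial.C (PowerSeries.coeff i Qs) * Polynomial.X ^ i).degree < (e : WithBot ℕ) := by
    rw [Polynomial.degree_lt_iff_coeff_zero]
    intro m hm
    rw [Polynomial.finset_sum_coeff]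
    refine Finset.sum_eq_zero fun j hj => ?_
    have hj' := Finset.mem_range.mp hj
    rw [Polynomial.coeff_C_mul, Polynomial.coeff_X_pow, if_neg (by
      intro h; rw [h] at hm; exact absurd hm (by simpa using hj')), mul_zero]
  have hmonic : Qp.Monic := Polynomial.monic_X_pow_add hsumdeg
  have hdeg : Qp.natDegree = e := by
    apply Polynomial.natDegree_eq_of_degree_eq_some
    rw [hQp, Polynomial.degree_add_eq_left_of_degree_lt, Polynomial.degree_X_pow]
    rw [Polynomial.degree_X_pow]
    exact hsumdeg
  have hQpc : ∀ i, i < e → Qp.coeff i = PowerSeries.coeff i Qs := by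
    intro i hi
    rw [hQp, Polynomial.coeff_add, Polynomial.coeff_X_pow, if_neg (by omega),
      Polynomial.finset_sum_coeff, zero_add]
    rw [Finset.sum_eq_single i]
    · rw [Polynomial.coeff_C_mul, Polynomial.coeff_X_pow, if_pos rfl, mul_one]
    · intro j _ hji
      rw [Polynomial.coeff_C_mul, Polynomial.coeff_X_pow, if_neg (fun h => hji h.symm),
        mul_zero]
    · intro h; exact absurd (Finset.mem_range.mpr hi) h
  have hQpc' : ∀ n, e ≤ n → Qp.coeff n = if n = e then 1 else 0 := by
    intro n hn
    rw [hQp, Polynomial.coeff_add, Polynomial.coeff_X_pow,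
      Polynomial.finset_sum_coeff]
    rw [Finset.sum_eq_zero, add_zero]
    intro j hj
    have hj' := Finset.mem_range.mp hj
    rw [Polynomial.coeff_C_mul, Polynomial.coeff_X_pow, if_neg (by omega), mul_zero]
  have hcoe : (Qp : PowerSeries (PowerSeries k)) = Qs := by
    apply PowerSeries.ext; intro n
    rw [Polynomial.coeff_coe]
    rcases lt_or_ge n e with hn | hn
    · rw [hQpc n hn]
    · obtain ⟨m, rfl⟩ : ∃ m, n = m + e := ⟨n - e, by omega⟩
      rw [hQpc' _ hn, hhigh m]
      congr 1
      simp only [eq_iff_iff]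
      omega
  refine ⟨↑qu⁻¹, Qp, (qu⁻¹).isUnit, hmonic, hdeg, ?_, ?_, ?_⟩
  · intro i hi
    rw [hQpc i hi, hlow i hi, map_mul, PowerSeries.constantCoeff_X, zero_mul]
  · refine ⟨PowerSeries.coeff 0 (g * t), ?_, ?_⟩
    · have := PowerSeries.isUnit_constantCoeff _ (hUg.mul hUt)
      rwa [← PowerSeries.coeff_zero_eq_constantCoeff_apply] at this
    · rw [hQpc 0 he, hlow 0 he]
  · rw [hcoe, hQs_def, ← hqu, ← mul_assoc, Units.inv_mul, one_mul]
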